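/- Every capacitated graph (G, κ) has at least one DP-Nash subgraph. -/

import Mathlib

open Finset
open scoped Classical

noncomputable section

variable {V : Type*} [Fintype V]

/-- Degree of a vertex in a (simple) graph on a finite vertex set. -/
def deg (H : SimpleGraph V) (x : V) : ℕ :=
  (Finset.univ.filter fun y => H.Adj x y).card

/-- `(D, P; H)` is a DP-Nash subgraph of the capacitated graph `(G, κ)`:
`H` is a spanning subgraph of `G`, bipartite with partite sets `D` and `P`,
no vertex of `P` is isolated in `H`, and every `x ∈ D` has
`H`-degree `min (d_G x) (κ x)`. -/
def IsDPNash (G : SimpleGraph V) (κ : V → ℕ) (D P : Finset V) (H : SimpleGraph V) : Prop :=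
  H ≤ G ∧ D ∪ P = Finset.univ ∧ Disjoint D P ∧
    (∀ ⦃u v⦄, H.Adj u v → (u ∈ D ∧ v ∈ P) ∨ (u ∈ P ∧ v ∈ D)) ∧
    (∀ v ∈ P, 0 < deg H v) ∧
    (∀ x ∈ D, deg H x = min (deg G x) (κ x))

/-- `X = {x : κ(x) = d_G(x)}`. -/
def XX (G : SimpleGraph V) (κ : V → ℕ) : Finset V :=
  Finset.univ.filter fun x => κ x = deg G x

/-- `Y = N(X) \ X`. -/
def YY (G : SimpleGraph V) (κ : V → ℕ) : Finset V :=
  Finset.univ.filter fun y => y ∉ XX G κ ∧ ∃ x ∈ XX G κ, G.Adj x y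

/-- `Z = V \ (X ∪ Y)`. -/
def ZZ (G : SimpleGraph V) (κ : V → ℕ) : Finset V :=
  Finset.univ \ (XX G κ ∪ YY G κ)

/-- `Y^{κ>0} = {y ∈ Y : κ(y) > 0}`. -/
def Ypos (G : SimpleGraph V) (κ : V → ℕ) : Finset V :=
  (YY G κ).filter fun y => 0 < κ y

/-- The neighbours of `x` in `G` lying in `W`. -/
def nbrW (G : SimpleGraph V) (x : V) (W : Finset V) : Finset V :=
  Finset.univ.filter fun y => G.Adj x y ∧ y ∈ W

/-- `L(W) = {x ∈ X ∪ Z : |N_G(x) ∩ W| > d_G(x) - κ(x)}`. -/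
def LL (G : SimpleGraph V) (κ : V → ℕ) (W : Finset V) : Finset V :=
  (XX G κ ∪ ZZ G κ).filter fun x => deg G x - κ x < (nbrW G x W).card

lemma mem_nbrW {G : SimpleGraph V} {x y : V} {W : Finset V} :
    y ∈ nbrW G x W ↔ G.Adj x y ∧ y ∈ W := by simp [nbrW]

lemma nbrW_mono {G : SimpleGraph V} {x : V} {W₁ W₂ : Finset V} (h : W₁ ⊆ W₂) :
    nbrW G x W₁ ⊆ nbrW G x W₂ := by
  intro y hy; rw [mem_nbrW] at *; exact ⟨hy.1, h hy.2⟩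

lemma nbrW_erase {G : SimpleGraph V} {x w : V} {W : Finset V} :
    nbrW G x (W.erase w) = (nbrW G x W).erase w := by
  ext y; simp [mem_nbrW, Finset.mem_erase]; tauto

lemma deg_congr {H K : SimpleGraph V} {x : V} (h : ∀ y, H.Adj x y ↔ K.Adj x y) :
    deg H x = deg K x := by
  unfold deg; congr 1; apply Finset.filter_congr; intro y _; exact h y

lemma deg_mono {H K : SimpleGraph V} (h : H ≤ K) (x : V) : deg H x ≤ deg K x := by
  apply Finset.card_le_card
  intro y hy
  simp only [Finset.mem_filter] at *
  exact ⟨hy.1, h hy.2⟩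

lemma deg_pos {H : SimpleGraph V} {x y : V} (h : H.Adj x y) : 0 < deg H x := by
  apply Finset.card_pos.mpr
  exact ⟨y, by simp [h]⟩

lemma aux (G : SimpleGraph V) (κ : V → ℕ) :
    ∀ n (A P₀ : Finset V), A.card = n → Disjoint A P₀ →
    ∃ (D P : Finset V) (H : SimpleGraph V),
      D ∪ P = A ∧ Disjoint D P ∧ H ≤ G ∧
      (∀ ⦃u v⦄, H.Adj u v → (u ∈ D ∧ v ∈ P ∪ P₀) ∨ (u ∈ P ∪ P₀ ∧ v ∈ D)) ∧
      (∀ y ∈ P, 0 < deg H y) ∧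
      (∀ x ∈ D, deg H x = min (nbrW G x (A ∪ P₀)).card (κ x)) := by
  intro n
  induction n using Nat.strong_induction_on with
  | _ n IH =>
  intro A P₀ hcard hdisjAP
  rcases A.eq_empty_or_nonempty with rfl | hAne
  · refine ⟨∅, ∅, ⊥, by simp, by simp, bot_le, ?_, by simp, by simp⟩
    intro u v h; simp at h
  -- choose a pivot vertex w and a set S of neighbours
  have hws : ∃ w ∈ A, ∃ S, S ⊆ nbrW G w (A ∪ P₀) ∧
      S.card = min (nbrW G w (A ∪ P₀)).card (κ w) ∧
      ∀ u ∈ A, u ≠ w → u ∉ S → G.Adj u w → κ u < (nbrW G u (A ∪ P₀)).card := by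
    by_cases hbig : ∃ w ∈ A, (nbrW G w A).card ≤ κ w
    · obtain ⟨w, hwA, hwκ⟩ := hbig
      have hsub : nbrW G w A ⊆ nbrW G w (A ∪ P₀) := nbrW_mono Finset.subset_union_left
      set m := min (nbrW G w (A ∪ P₀)).card (κ w) with hm
      have h1 : (nbrW G w A).card ≤ m := by
        have := Finset.card_le_card hsub
        omega
      have h2 : m ≤ (nbrW G w (A ∪ P₀)).card := min_le_left _ _
      obtain ⟨S, hS1, hS2, hS3⟩ :=
        Finset.exists_subsuperset_card_eq hsub h1 h2
      refine ⟨w, hwA, S, hS2, by omega, ?_⟩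
      intro u huA hune huS hadj
      exact absurd (hS1 (mem_nbrW.mpr ⟨hadj.symm, huA⟩)) huS
    · push_neg at hbig
      obtain ⟨w, hwA⟩ := hAne
      obtain ⟨S, hS1, hS2⟩ := Finset.exists_subset_card_eq (s := nbrW G w (A ∪ P₀))
        (n := min (nbrW G w (A ∪ P₀)).card (κ w)) (min_le_left _ _)
      refine ⟨w, hwA, S, hS1, hS2, ?_⟩
      intro u huA _ _ _
      have h1 := hbig u huA
      have h2 : (nbrW G u A).card ≤ (nbrW G u (A ∪ P₀)).card :=
        Finset.card_le_card (nbrW_mono Finset.subset_union_left)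
      omega
  obtain ⟨w, hwA, S, hSsub, hScard, hpres⟩ := hws
  have hwS : w ∉ S := fun h => (G.irrefl (mem_nbrW.mp (hSsub h)).1)
  have hwP₀ : w ∉ P₀ := fun h => (Finset.disjoint_left.mp hdisjAP hwA) h
  set SA := S ∩ A with hSA
  set A' := A \ insert w SA with hA'
  set P₀' := P₀ ∪ SA with hP₀'
  have hSA_A : SA ⊆ A := Finset.inter_subset_right
  have hwSA : w ∉ SA := fun h => hwS (Finset.mem_inter.mp h).1
  have hA'A : A' ⊆ A := Finset.sdiff_subset
  have hwA' : w ∉ A' := fun h => (Finset.mem_sdiff.mp h).2 (Finset.mem_insert_self w _)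
  have hA'card : A'.card < n := by
    rw [← hcard]
    exact Finset.card_lt_card ⟨hA'A, fun h => hwA' (h hwA)⟩
  have hdisj' : Disjoint A' P₀' := by
    rw [Finset.disjoint_left]
    intro u hu hu'
    rcases Finset.mem_union.mp hu' with h | h
    · exact Finset.disjoint_left.mp hdisjAP (hA'A hu) h
    · exact (Finset.mem_sdiff.mp hu).2 (Finset.mem_insert_of_mem h)
  have hAP : A' ∪ P₀' = (A ∪ P₀).erase w := by
    ext u
    simp only [hA', hP₀', Finset.mem_union, Finset.mem_sdiff, Finset.mem_insert,
      Finset.mem_erase, hSA, Finset.mem_inter]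
    constructor
    · rintro (⟨hA, hn⟩ | h)
      · push_neg at hn; exact ⟨hn.1, Or.inl hA⟩
      · refine ⟨?_, ?_⟩
        · rintro rfl
          rcases h with h | ⟨h1, _⟩
          · exact hwP₀ h
          · exact hwS h1
        · rcases h with h | ⟨_, h2⟩
          · exact Or.inr h
          · exact Or.inl h2
    · rintro ⟨hne, hA | hP⟩
      · by_cases hS : u ∈ S
        · exact Or.inr (Or.inr ⟨hS, hA⟩)
        · exact Or.inl ⟨hA, by push_neg; exact ⟨hne, fun h => absurd h hS⟩⟩
      · exact Or.inr (Or.inl hP)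
  obtain ⟨D', P', H', hDP', hdisjDP', hle', horient', hPdeg', hDdeg'⟩ :=
    IH A'.card hA'card A' P₀' rfl hdisj'
  have hD'A' : D' ⊆ A' := fun u hu => hDP' ▸ Finset.mem_union_left _ hu
  have hP'A' : P' ⊆ A' := fun u hu => hDP' ▸ Finset.mem_union_right _ hu
  set Hs : SimpleGraph V := SimpleGraph.fromRel (fun u v => u = w ∧ v ∈ S) with hHs
  have hHs_adj : ∀ u v, Hs.Adj u v ↔ u ≠ v ∧ ((u = w ∧ v ∈ S) ∨ (v = w ∧ u ∈ S)) := by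
    intro u v; rw [hHs, SimpleGraph.fromRel_adj]
  set H : SimpleGraph V := H' ⊔ Hs with hH
  set D := insert w D' with hD
  set P := P' ∪ SA with hP
  have hPP : P' ∪ P₀' = P ∪ P₀ := by
    ext u; simp only [hP₀', hP, Finset.mem_union]; tauto
  -- no H' edges at w
  have hH'w : ∀ y, ¬ H'.Adj w y := by
    intro y hy
    rcases horient' hy with ⟨h1, _⟩ | ⟨h1, _⟩
    · exact hwA' (hD'A' h1)
    · rcases Finset.mem_union.mp h1 with h | h
      · exact hwA' (hP'A' h)
      · rcases Finset.mem_union.mp h with h | h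
        · exact hwP₀ h
        · exact hwSA h
  -- no Hs edges at vertices of A'
  have hHsA' : ∀ u, u ∈ A' → ∀ y, ¬ Hs.Adj u y := by
    intro u hu y hy
    rw [hHs_adj] at hy
    rcases hy.2 with ⟨rfl, _⟩ | ⟨_, h2⟩
    · exact hwA' hu
    · exact (Finset.mem_sdiff.mp hu).2
        (Finset.mem_insert_of_mem (Finset.mem_inter.mpr ⟨h2, hA'A hu⟩))
  refine ⟨D, P, H, ?_, ?_, ?_, ?_, ?_, ?_⟩
  · -- D ∪ P = A
    have hmem : ∀ u, (u ∈ D' ∨ u ∈ P') ↔ u ∈ A' := by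
      intro u; rw [← Finset.mem_union, hDP']
    ext u
    constructor
    · intro hu
      rcases Finset.mem_union.mp hu with hu | hu
      · rcases Finset.mem_insert.mp hu with h | h
        · exact h ▸ hwA
        · exact hA'A ((hmem u).mp (Or.inl h))
      · rcases Finset.mem_union.mp hu with h | h
        · exact hA'A ((hmem u).mp (Or.inr h))
        · exact hSA_A h
    · intro huA
      by_cases h1 : u = w
      · exact Finset.mem_union_left _ (h1 ▸ Finset.mem_insert_self w D')
      · by_cases h2 : u ∈ SA
        · exact Finset.mem_union_right _ (Finset.mem_union_right _ h2)
        · have huA' : u ∈ A' := Finset.mem_sdiff.mpr ⟨huA, by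
            simp only [Finset.mem_insert]; push_neg; exact ⟨h1, h2⟩⟩
          rcases (hmem u).mpr huA' with h | h
          · exact Finset.mem_union_left _ (Finset.mem_insert_of_mem h)
          · exact Finset.mem_union_right _ (Finset.mem_union_left _ h)
  · -- Disjoint D P
    rw [Finset.disjoint_left]
    intro u hu hu'
    rcases Finset.mem_insert.mp hu with rfl | hu
    · rcases Finset.mem_union.mp hu' with h | h
      · exact hwA' (hP'A' h)
      · exact hwSA h
    · rcases Finset.mem_union.mp hu' with h | h
      · exact Finset.disjoint_left.mp hdisjDP' hu h
      · exact (Finset.mem_sdiff.mp (hD'A' hu)).2 (Finset.mem_insert_of_mem h)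
  · -- H ≤ G
    rw [hH]
    refine sup_le hle' ?_
    intro u v huv
    rw [hHs_adj] at huv
    rcases huv.2 with ⟨rfl, h2⟩ | ⟨rfl, h2⟩
    · exact (mem_nbrW.mp (hSsub h2)).1
    · exact ((mem_nbrW.mp (hSsub h2)).1).symm
  · -- orientation
    intro u v huv
    rcases (SimpleGraph.sup_adj _ _ _ _).mp huv with h | h
    · rcases horient' h with ⟨h1, h2⟩ | ⟨h1, h2⟩
      · exact Or.inl ⟨Finset.mem_insert_of_mem h1, hPP ▸ h2⟩
      · exact Or.inr ⟨hPP ▸ h1, Finset.mem_insert_of_mem h2⟩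
    · rw [hHs_adj] at h
      have key : ∀ z, z ∈ S → z ∈ P ∪ P₀ := by
        intro z hz
        rcases Finset.mem_union.mp (mem_nbrW.mp (hSsub hz)).2 with h | h
        · exact Finset.mem_union_left _
            (Finset.mem_union_right _ (Finset.mem_inter.mpr ⟨hz, h⟩))
        · exact Finset.mem_union_right _ h
      rcases h.2 with ⟨rfl, h2⟩ | ⟨rfl, h2⟩
      · exact Or.inl ⟨Finset.mem_insert_self _ _, key v h2⟩
      · exact Or.inr ⟨key u h2, Finset.mem_insert_self _ _⟩
  · -- P degrees
    intro y hy
    rcases Finset.mem_union.mp hy with h | h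
    · calc 0 < deg H' y := hPdeg' y h
        _ ≤ deg H y := deg_mono le_sup_left y
    · have hyS : y ∈ S := (Finset.mem_inter.mp h).1
      have : H.Adj y w := by
        rw [hH, SimpleGraph.sup_adj, hHs_adj]
        exact Or.inr ⟨fun hh => hwS (hh ▸ hyS), Or.inr ⟨rfl, hyS⟩⟩
      exact deg_pos this
  · -- D degrees
    intro x hx
    rcases Finset.mem_insert.mp hx with hxw | hx
    · -- x = w
      rw [hxw]
      have : deg H w = S.card := by
        unfold deg
        congr 1
        ext y
        simp only [Finset.mem_filter, Finset.mem_univ, true_and, hH,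
          SimpleGraph.sup_adj]
        constructor
        · rintro (h | h)
          · exact absurd h (hH'w y)
          · rw [hHs_adj] at h
            rcases h.2 with ⟨_, h2⟩ | ⟨rfl, h2⟩
            · exact h2
            · exact absurd h2 hwS
        · intro hy
          refine Or.inr ?_
          rw [hHs_adj]
          exact ⟨fun hh => hwS (hh ▸ hy), Or.inl ⟨rfl, hy⟩⟩
      rw [this, hScard]
    · -- x ∈ D'
      have hxA' : x ∈ A' := hD'A' hx
      have hdegx : deg H x = deg H' x := by
        apply deg_congr
        intro y
        rw [hH, SimpleGraph.sup_adj]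
        constructor
        · rintro (h | h)
          · exact h
          · exact absurd h (hHsA' x hxA' y)
        · exact Or.inl
      rw [hdegx, hDdeg' x hx, hAP, nbrW_erase]
      by_cases hadj : G.Adj x w
      · have hwmem : w ∈ nbrW G x (A ∪ P₀) :=
          mem_nbrW.mpr ⟨hadj, Finset.mem_union_left _ hwA⟩
        rw [Finset.card_erase_of_mem hwmem]
        have hxne : x ≠ w := fun h => hwA' (h ▸ hxA')
        have hxS : x ∉ S := fun h => (Finset.mem_sdiff.mp hxA').2
          (Finset.mem_insert_of_mem (Finset.mem_inter.mpr ⟨h, hA'A hxA'⟩))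
        have := hpres x (hA'A hxA') hxne hxS hadj
        omega
      · rw [Finset.erase_eq_of_notMem]
        intro h
        exact hadj (mem_nbrW.mp h).1

/-- Every capacitated graph has at least one DP-Nash subgraph. -/
theorem stmt0 (G : SimpleGraph V) (κ : V → ℕ) :
    ∃ (D P : Finset V) (H : SimpleGraph V), IsDPNash G κ D P H := by
  obtain ⟨D, P, H, hDP, hdisj, hle, horient, hPdeg, hDdeg⟩ :=
    aux G κ (Finset.univ.card) Finset.univ ∅ rfl (by simp)
  refine ⟨D, P, H, hle, hDP.trans rfl ▸ hDP, hdisj, ?_, hPdeg, ?_⟩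
  · intro u v h
    rcases horient h with ⟨h1, h2⟩ | ⟨h1, h2⟩
    · exact Or.inl ⟨h1, by simpa using h2⟩
    · exact Or.inr ⟨by simpa using h1, h2⟩
  · intro x hx
    rw [hDdeg x hx]
    congr 1
    simp [nbrW, deg]
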